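/- arXiv:1601.05576 — 3 statements merged into one kernel-verified Lean document; each statement's English description precedes it below -/
import Mathlib

section
/- Let φ : ℕ → ℝ be a sequence with φ_n > 0 for all n satisfying the recurrence (n+1)(φ_{n+1}² − φ_n²)/φ_{n+1} + n(φ_{n-1}² − φ_n²)/φ_{n-1} = R/φ_n for n ≥ 1 (with R > 0), together with φ_1² − φ_0² = R φ_1/φ_0. Then the sequence (φ_n) is strictly increasing. -/
/-- A positive solution of the constant-curvature recurrence on the Moyal plane
is strictly increasing. -/
theorem moyal_sphere_stmt5 (R : ℝ) (hR : 0 < R) (φ : ℕ → ℝ)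
    (hpos : ∀ n, 0 < φ n)
    (hrec : ∀ n : ℕ, 1 ≤ n →
      ((n : ℝ) + 1) * (φ (n + 1) ^ 2 - φ n ^ 2) / φ (n + 1)
        + (n : ℝ) * (φ (n - 1) ^ 2 - φ n ^ 2) / φ (n - 1) = R / φ n)
    (h0 : φ 1 ^ 2 - φ 0 ^ 2 = R * φ 1 / φ 0) :
    StrictMono φ := by
  have key : ∀ n, φ n < φ (n + 1) := by
    intro n
    induction n with
    | zero =>
      have h1 : 0 < R * φ 1 / φ 0 := div_pos (mul_pos hR (hpos 1)) (hpos 0)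
      nlinarith [hpos 0, hpos 1]
    | succ n ih =>
      have ha := hpos n
      have hb := hpos (n + 1)
      have hc := hpos (n + 2)
      have h := hrec (n + 1) (by omega)
      simp only [Nat.add_sub_cancel, show n + 1 + 1 = n + 2 from rfl] at h
      push_cast at h
      have pos1 : 0 < R / φ (n + 1) := div_pos hR hb
      have pos2 : 0 < ((n : ℝ) + 1) * (φ (n + 1) ^ 2 - φ n ^ 2) / φ n := by
        apply div_pos _ ha
        have h5 : (0:ℝ) < (n : ℝ) + 1 := by positivity
        have h6 : 0 < φ (n + 1) ^ 2 - φ n ^ 2 := by nlinarith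
        exact mul_pos h5 h6
      have hsum : ((n : ℝ) + 1) * (φ n ^ 2 - φ (n + 1) ^ 2) / φ n
          = -(((n : ℝ) + 1) * (φ (n + 1) ^ 2 - φ n ^ 2) / φ n) := by ring
      have h2 : 0 < ((n : ℝ) + 1 + 1) * (φ (n + 2) ^ 2 - φ (n + 1) ^ 2) / φ (n + 2) := by
        rw [hsum] at h
        linarith
      rw [div_pos_iff] at h2
      rcases h2 with ⟨h3, _⟩ | ⟨_, h4⟩
      · by_contra hle
        push_neg at hle
        have hsq : φ (n + 2) ^ 2 ≤ φ (n + 1) ^ 2 := by nlinarith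
        have hn : (0:ℝ) < (n : ℝ) + 1 + 1 := by positivity
        nlinarith
      · linarith
  exact strictMono_nat_of_lt_succ key
end

section
/- The general solution of the linear ODE ε''(r) + (1/r − 4r/(1+r²)) ε'(r) + 4/(1+r²) ε(r) + 8η(1−r²)/(1+r²)³ = 0 on (0,∞) is ε(r) = C₁(r²−1) + C₂((r²−1)log r − 2) − (η/3)(1+r²)^{-1}[(1−r⁴)log(1+r²) + 2(r⁴−1)log r + r² − 2]; in particular this ε is a solution for any constants C₁, C₂. -/
open Real

noncomputable def msGfun (η C₁ C₂ : ℝ) : ℝ → ℝ := fun r =>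
  2 * C₁ * r + C₂ * (2 * r * Real.log r + (r ^ 2 - 1) / r)
    - η / 3 * (-(2 * r) * Real.log (1 + r ^ 2) + 4 * r * Real.log r
        + (4 * r - 2 * r⁻¹) * (1 + r ^ 2)⁻¹
        - 2 * r * (r ^ 2 - 2) * ((1 + r ^ 2)⁻¹) ^ 2)

lemma msOne_add_sq_ne (r : ℝ) : (1 : ℝ) + r ^ 2 ≠ 0 := by positivity

lemma msHasDeriv1 (η C₁ C₂ : ℝ) {r : ℝ} (hr : 0 < r) :
    HasDerivAt (fun r => C₁ * (r ^ 2 - 1) + C₂ * ((r ^ 2 - 1) * Real.log r - 2)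
      - (η / 3) * (1 + r ^ 2)⁻¹ *
        ((1 - r ^ 4) * Real.log (1 + r ^ 2) + 2 * (r ^ 4 - 1) * Real.log r + r ^ 2 - 2))
      (msGfun η C₁ C₂ r) r := by
  have hne := msOne_add_sq_ne r
  have hr2 : HasDerivAt (fun r : ℝ => r ^ 2) (2 * r) r := by
    simpa using hasDerivAt_pow 2 r
  have hr4 : HasDerivAt (fun r : ℝ => r ^ 4) (4 * r ^ 3) r := by
    simpa using hasDerivAt_pow 4 r
  have h1r2 : HasDerivAt (fun r : ℝ => 1 + r ^ 2) (2 * r) r := hr2.const_add 1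
  have hu : HasDerivAt (fun r : ℝ => (1 + r ^ 2)⁻¹) (-(2 * r) / (1 + r ^ 2) ^ 2) r :=
    h1r2.inv hne
  have hM : HasDerivAt (fun r : ℝ => Real.log (1 + r ^ 2)) (2 * r / (1 + r ^ 2)) r :=
    h1r2.log hne
  have hL : HasDerivAt Real.log r⁻¹ r := Real.hasDerivAt_log hr.ne'
  have T1 := (hr2.sub_const 1).const_mul C₁
  have T2 := (((hr2.sub_const 1).mul hL).sub_const 2).const_mul C₂
  have hP := ((((hr4.const_sub 1).mul hM).add
      (((hr4.sub_const 1).const_mul 2).mul hL)).add hr2).sub_const 2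
  have T3 := (hu.const_mul (η / 3)).mul hP
  have H := (T1.add T2).sub T3
  refine H.congr_deriv ?_
  simp only [Pi.mul_apply, Pi.add_apply, Pi.sub_apply, Pi.neg_apply, Pi.pow_apply, Pi.div_apply]
  unfold msGfun
  field_simp
  ring

lemma msHasDeriv2 (η C₁ C₂ : ℝ) {r : ℝ} (hr : 0 < r) :
    HasDerivAt (msGfun η C₁ C₂)
      (2 * C₁ + C₂ * (2 * Real.log r + 3 + (r⁻¹) ^ 2)
        - η / 3 * (-(2 * Real.log (1 + r ^ 2)) - 4 * r ^ 2 * (1 + r ^ 2)⁻¹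
            + 4 * Real.log r + 4 + (4 + 2 * (r⁻¹) ^ 2) * (1 + r ^ 2)⁻¹
            - (8 * r ^ 2 - 4) * ((1 + r ^ 2)⁻¹) ^ 2
            - (6 * r ^ 2 - 4) * ((1 + r ^ 2)⁻¹) ^ 2
            + 8 * r ^ 2 * (r ^ 2 - 2) * ((1 + r ^ 2)⁻¹) ^ 3)) r := by
  have hne := msOne_add_sq_ne r
  have hr2 : HasDerivAt (fun r : ℝ => r ^ 2) (2 * r) r := by
    simpa using hasDerivAt_pow 2 r
  have h1r2 : HasDerivAt (fun r : ℝ => 1 + r ^ 2) (2 * r) r := hr2.const_add 1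
  have hu : HasDerivAt (fun r : ℝ => (1 + r ^ 2)⁻¹) (-(2 * r) / (1 + r ^ 2) ^ 2) r :=
    h1r2.inv hne
  have hM : HasDerivAt (fun r : ℝ => Real.log (1 + r ^ 2)) (2 * r / (1 + r ^ 2)) r :=
    h1r2.log hne
  have hL : HasDerivAt Real.log r⁻¹ r := Real.hasDerivAt_log hr.ne'
  have hid : HasDerivAt (fun r : ℝ => r) 1 r := hasDerivAt_id r
  have hinv : HasDerivAt (fun r : ℝ => r⁻¹) (-(r ^ 2)⁻¹) r := hasDerivAt_inv hr.ne'
  have T1 := hid.const_mul (2 * C₁)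
  have T2 := (((hid.const_mul 2).mul hL).add
      ((hr2.sub_const 1).div hid hr.ne')).const_mul C₂
  have B1 := ((hid.const_mul 2).neg.mul hM)
  have B2 := (hid.const_mul 4).mul hL
  have B3 := ((hid.const_mul 4).sub (hinv.const_mul 2)).mul hu
  have B4 := ((hid.const_mul 2).mul (hr2.sub_const 2)).mul (hu.pow 2)
  have H := (T1.add T2).sub ((((B1.add B2).add B3).sub B4).const_mul (η / 3))
  refine H.congr_deriv ?_
  simp only [Pi.mul_apply, Pi.add_apply, Pi.sub_apply, Pi.neg_apply, Pi.pow_apply, Pi.div_apply]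
  norm_num
  field_simp
  ring

/-- For any constants `C₁, C₂`, the function
`ε(r) = C₁(r²−1) + C₂((r²−1)log r − 2) − (η/3)(1+r²)⁻¹[(1−r⁴)log(1+r²) + 2(r⁴−1)log r + r² − 2]`
solves the order-θ² ODE
`ε'' + (1/r − 4r/(1+r²)) ε' + 4/(1+r²) ε + 8η(1−r²)/(1+r²)³ = 0` on `(0,∞)`. -/
theorem moyal_sphere_stmt14 (η C₁ C₂ : ℝ) (ε : ℝ → ℝ)
    (hε : ∀ r, ε r = C₁ * (r ^ 2 - 1) + C₂ * ((r ^ 2 - 1) * Real.log r - 2)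
      - (η / 3) * (1 + r ^ 2)⁻¹ *
        ((1 - r ^ 4) * Real.log (1 + r ^ 2) + 2 * (r ^ 4 - 1) * Real.log r + r ^ 2 - 2)) :
    ∀ r > 0,
      deriv (deriv ε) r + (1 / r - 4 * r / (1 + r ^ 2)) * deriv ε r
        + 4 / (1 + r ^ 2) * ε r + 8 * η * (1 - r ^ 2) / (1 + r ^ 2) ^ 3 = 0 := by
  intro r hr
  have hεf : ε = fun r => C₁ * (r ^ 2 - 1) + C₂ * ((r ^ 2 - 1) * Real.log r - 2)
      - (η / 3) * (1 + r ^ 2)⁻¹ *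
        ((1 - r ^ 4) * Real.log (1 + r ^ 2) + 2 * (r ^ 4 - 1) * Real.log r + r ^ 2 - 2) :=
    funext hε
  have hd1 : ∀ x ∈ Set.Ioi (0 : ℝ), deriv ε x = msGfun η C₁ C₂ x := by
    intro x hx
    rw [hεf]
    exact (msHasDeriv1 η C₁ C₂ hx).deriv
  have hev : deriv ε =ᶠ[nhds r] msGfun η C₁ C₂ :=
    Filter.eventuallyEq_of_mem (isOpen_Ioi.mem_nhds hr) hd1
  have hd2 : deriv (deriv ε) r = deriv (msGfun η C₁ C₂) r := hev.deriv_eq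
  rw [hd2, (msHasDeriv2 η C₁ C₂ hr).deriv, hd1 r hr, hε r]
  have hne := msOne_add_sq_ne r
  unfold msGfun
  field_simp
  ring
end

section
/- Let φ_n be a solution of the constant-curvature recurrence (n+1)(φ_{n+1}² − φ_n²)/φ_{n+1} + n(φ_{n-1}² − φ_n²)/φ_{n-1} = R/φ_n. Then the formal asymptotic expansion φ_n = n + (R+1)/2 + (1/8)n^{-1} − ((13R+9)/144)n^{-2} + O(n^{-3}) satisfies the recurrence up to errors of order n^{-3}: substituting ψ_n = n + (R+1)/2 + (1/8)n^{-1} − ((13R+9)/144)n^{-2} into the left-hand side minus right-hand side yields O(n^{-3}) as n → ∞. -/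
open Filter Asymptotics

set_option maxHeartbeats 3200000

/-- Numerator profile (in `u = 1/n`) of the recurrence defect divided by `1/n^3`. -/
noncomputable def moyalNt (R u : ℝ) : ℝ :=
    ((746496) + (-8626176)*R + (-4810752)*R^2) * u^1 +
    ((-5785344) + (-9191232)*R + (-3836160)*R^2 + (-2198016)*R^3) * u^2 +
    ((-2286144) + (21119616)*R + (10300608)*R^2 + (-186624)*R^3 + (-269568)*R^4) * u^3 +
    ((9797760) + (17589312)*R + (10063872)*R^2 + (5672880)*R^3 + (67392)*R^4) * u^4 +
    ((3965760) + (-13589856)*R + (-5544576)*R^2 + (504144)*R^3 + (703872)*R^4) * u^5 +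
    ((-3712068) + (-9282033)*R + (-7524324)*R^2 + (-4134420)*R^3 + (-146952)*R^4) * u^6 +
    ((-2394765) + (1614168)*R + (733689)*R^2 + (-350136)*R^3 + (-510484)*R^4) * u^7 +
    ((-165483) + (5993433/4)*R + (2195757)*R^2 + (4376779/4)*R^3 + (71279)*R^4) * u^8 +
    ((258795) + (1187379/4)*R + (-87669)*R^2 + (456257/4)*R^3 + (152061)*R^4) * u^9 +
    ((-441045/8) + (-841671/4)*R + (-240516)*R^2 + (-397631/4)*R^3 + (-811031/72)*R^4) * u^10 +
    ((-10935/4) + (34587/4)*R + (29889/2)*R^2 + (-73203/4)*R^3 + (-707603/36)*R^4) * u^11 +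
    ((75087/16) + (114939/8)*R + (49491/4)*R^2 + (19097/8)*R^3 + (24167/48)*R^4) * u^12 +
    ((-8019/16) + (-14985/8)*R + (-7371/4)*R^2 + (2873/8)*R^3 + (129623/144)*R^4) * u^13

/-- Denominator profile (in `u = 1/n`) of the recurrence defect divided by `1/n^3`. -/
noncomputable def moyalDt (R u : ℝ) : ℝ :=
    (1+u) * (1-u)^2
      * (144*(1+u)^3 + (72*R + 72)*u*(1+u)^2 + 18*u^2*(1+u) - (13*R + 9)*u^3)
      * (144*(1-u)^3 + (72*R + 72)*u*(1-u)^2 + 18*u^2*(1-u) - (13*R + 9)*u^3)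
      * (144 + (72*R + 72)*u + 18*u^2 - (13*R + 9)*u^3)

/-- The asymptotic profile `ψ_n = n + (R+1)/2 + (1/8)n⁻¹ − ((13R+9)/144)n⁻²`
satisfies the constant-curvature recurrence up to errors of order `n⁻³`. -/
theorem moyal_sphere_stmt18 (R : ℝ) (hR : 0 < R) (ψ : ℕ → ℝ)
    (hψ : ∀ n : ℕ, ψ n = (n : ℝ) + (R + 1) / 2 + (1 / 8) / (n : ℝ)
      - ((13 * R + 9) / 144) / (n : ℝ) ^ 2) :
    (fun n : ℕ =>
        ((n : ℝ) + 1) * (ψ (n + 1) ^ 2 - ψ n ^ 2) / ψ (n + 1)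
          + (n : ℝ) * (ψ (n - 1) ^ 2 - ψ n ^ 2) / ψ (n - 1)
          - R / ψ n)
      =O[atTop] fun n : ℕ => 1 / (n : ℝ) ^ 3 := by
  have hPpos : ∀ y : ℝ, 1 ≤ y →
      0 < 144*(y)^3 + (72*R + 72)*(y)^2 + 18*(y) - (13*R + 9) := by
    intro y hy
    have hy2 : 1 ≤ y^2 := by nlinarith
    have hy3 : 1 ≤ y^3 := by nlinarith
    have hmul : 0 ≤ (72*R + 72) * (y^2 - 1) := by nlinarith
    nlinarith
  have key : (fun n : ℕ =>
        ((n : ℝ) + 1) * (ψ (n + 1) ^ 2 - ψ n ^ 2) / ψ (n + 1)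
          + (n : ℝ) * (ψ (n - 1) ^ 2 - ψ n ^ 2) / ψ (n - 1)
          - R / ψ n) / (fun n : ℕ => 1 / (n : ℝ) ^ 3)
      =ᶠ[atTop] fun n : ℕ => moyalNt R ((n:ℝ)⁻¹) / moyalDt R ((n:ℝ)⁻¹) := by
    filter_upwards [eventually_ge_atTop 2] with n hn
    have hn1 : 1 ≤ n := by omega
    have hx2 : (2:ℝ) ≤ (n:ℝ) := by exact_mod_cast hn
    have hx0 : (n:ℝ) ≠ 0 := by linarith
    have hxp : (n:ℝ) + 1 ≠ 0 := by linarith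
    have hxm : (n:ℝ) - 1 ≠ 0 := by linarith
    have hcast : ((n-1 : ℕ):ℝ) = (n:ℝ) - 1 := by
      push_cast [hn1]; ring
    have hP0 : 144*((n:ℝ))^3 + (72*R + 72)*((n:ℝ))^2 + 18*((n:ℝ)) - (13*R + 9) ≠ 0 :=
      ne_of_gt (hPpos ((n:ℝ)) (by linarith))
    have hPp : 144*((n:ℝ)+1)^3 + (72*R + 72)*((n:ℝ)+1)^2 + 18*((n:ℝ)+1) - (13*R + 9) ≠ 0 :=
      ne_of_gt (hPpos ((n:ℝ)+1) (by linarith))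
    have hPm : 144*((n:ℝ)-1)^3 + (72*R + 72)*((n:ℝ)-1)^2 + 18*((n:ℝ)-1) - (13*R + 9) ≠ 0 :=
      ne_of_gt (hPpos ((n:ℝ)-1) (by linarith))
    have eψ0 : ψ n = (144*((n:ℝ))^3 + (72*R + 72)*((n:ℝ))^2 + 18*((n:ℝ)) - (13*R + 9)) / (144*(n:ℝ)^2) := by
      rw [hψ n]; field_simp; ring
    have eψp : ψ (n+1) = (144*((n:ℝ)+1)^3 + (72*R + 72)*((n:ℝ)+1)^2 + 18*((n:ℝ)+1) - (13*R + 9)) / (144*((n:ℝ)+1)^2) := by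
      rw [hψ (n+1)]; push_cast; field_simp; ring
    have eψm : ψ (n-1) = (144*((n:ℝ)-1)^3 + (72*R + 72)*((n:ℝ)-1)^2 + 18*((n:ℝ)-1) - (13*R + 9)) / (144*((n:ℝ)-1)^2) := by
      rw [hψ (n-1), hcast]; field_simp; ring
    have e1 : (((746496) + (-8626176)*R + (-4810752)*R^2) * ((n:ℝ))^12 +
        ((-5785344) + (-9191232)*R + (-3836160)*R^2 + (-2198016)*R^3) * ((n:ℝ))^11 +
        ((-2286144) + (21119616)*R + (10300608)*R^2 + (-186624)*R^3 + (-269568)*R^4) * ((n:ℝ))^10 +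
        ((9797760) + (17589312)*R + (10063872)*R^2 + (5672880)*R^3 + (67392)*R^4) * ((n:ℝ))^9 +
        ((3965760) + (-13589856)*R + (-5544576)*R^2 + (504144)*R^3 + (703872)*R^4) * ((n:ℝ))^8 +
        ((-3712068) + (-9282033)*R + (-7524324)*R^2 + (-4134420)*R^3 + (-146952)*R^4) * ((n:ℝ))^7 +
        ((-2394765) + (1614168)*R + (733689)*R^2 + (-350136)*R^3 + (-510484)*R^4) * ((n:ℝ))^6 +
        ((-165483) + (5993433/4)*R + (2195757)*R^2 + (4376779/4)*R^3 + (71279)*R^4) * ((n:ℝ))^5 +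
        ((258795) + (1187379/4)*R + (-87669)*R^2 + (456257/4)*R^3 + (152061)*R^4) * ((n:ℝ))^4 +
        ((-441045/8) + (-841671/4)*R + (-240516)*R^2 + (-397631/4)*R^3 + (-811031/72)*R^4) * ((n:ℝ))^3 +
        ((-10935/4) + (34587/4)*R + (29889/2)*R^2 + (-73203/4)*R^3 + (-707603/36)*R^4) * ((n:ℝ))^2 +
        ((75087/16) + (114939/8)*R + (49491/4)*R^2 + (19097/8)*R^3 + (24167/48)*R^4) * ((n:ℝ))^1 +
        ((-8019/16) + (-14985/8)*R + (-7371/4)*R^2 + (2873/8)*R^3 + (129623/144)*R^4) * ((n:ℝ))^0)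
          / (n:ℝ)^13 = moyalNt R ((n:ℝ)⁻¹) := by
      unfold moyalNt
      field_simp
    have e2 : ((n:ℝ) * ((n:ℝ)+1) * ((n:ℝ)-1)^2
          * (144*((n:ℝ)+1)^3 + (72*R + 72)*((n:ℝ)+1)^2 + 18*((n:ℝ)+1) - (13*R + 9))
          * (144*((n:ℝ)-1)^3 + (72*R + 72)*((n:ℝ)-1)^2 + 18*((n:ℝ)-1) - (13*R + 9))
          * (144*((n:ℝ))^3 + (72*R + 72)*((n:ℝ))^2 + 18*((n:ℝ)) - (13*R + 9)))
          / (n:ℝ)^13 = moyalDt R ((n:ℝ)⁻¹) := by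
      unfold moyalDt
      field_simp
    simp only [Pi.div_apply]
    rw [eψ0, eψp, eψm, ← e1, ← e2,
      div_div_div_cancel_right₀ (pow_ne_zero 13 hx0)]
    have hP0' : (↑n * (↑n * (↑n * 144 + 72 * (R + 1)) + 18) - (R * 13 + 9)) ≠ 0 := by
      convert hP0 using 1; ring
    have hPp' : ((↑n + 1) * ((↑n + 1) * ((↑n + 1) * 144 + 72 * (R + 1)) + 18) - (R * 13 + 9)) ≠ 0 := by
      convert hPp using 1; ring
    have hPm' : ((↑n - 1) * ((↑n - 1) * (144 * (↑n - 1) + 72 * (R + 1)) + 18) - (R * 13 + 9)) ≠ 0 := by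
      convert hPm using 1; ring
    field_simp [hx0, hxp, hxm, hP0, hPp, hPm]
    ring
  have h0 : Tendsto (fun n : ℕ => ((n:ℝ))⁻¹) atTop (nhds 0) :=
    tendsto_inv_atTop_zero.comp tendsto_natCast_atTop_atTop
  have hcont : ContinuousAt (fun u : ℝ => moyalNt R u / moyalDt R u) 0 := by
    apply ContinuousAt.div
    · unfold moyalNt; fun_prop
    · unfold moyalDt; fun_prop
    · unfold moyalDt; norm_num
  have hlim : Tendsto (fun n : ℕ => moyalNt R ((n:ℝ)⁻¹) / moyalDt R ((n:ℝ)⁻¹)) atTop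
      (nhds (moyalNt R 0 / moyalDt R 0)) := hcont.tendsto.comp h0
  have hvac : ∀ᶠ n : ℕ in atTop, (1 : ℝ) / (n:ℝ) ^ 3 = 0 →
      ((n : ℝ) + 1) * (ψ (n + 1) ^ 2 - ψ n ^ 2) / ψ (n + 1)
          + (n : ℝ) * (ψ (n - 1) ^ 2 - ψ n ^ 2) / ψ (n - 1)
          - R / ψ n = 0 := by
    filter_upwards [eventually_ge_atTop 1] with n hn h
    have hx : (0:ℝ) < (n:ℝ) := by exact_mod_cast Nat.pos_of_ne_zero (by omega)
    exact absurd h (by positivity)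
  exact isBigO_of_div_tendsto_nhds hvac _ (Filter.Tendsto.congr' key.symm hlim)
end
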